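/- Let f : ℝ² → ℝ be differentiable and nowhere zero, V : ℝ² → ℝ differentiable, l(q,p) = (∂f/∂p₁)(p)·q₂ − (∂f/∂p₂)(p)·q₁, and fix t ∈ ℝ. On ℝ⁴ with coordinates (q₁,q₂,p₁,p₂), define the reduced symplectic matrix Ω_N(q,p) = (1/f(p)) · [[0,0,−1,0],[0,0,0,−1],[1,0,0,l/f],[0,1,−l/f,0]], the time-dependent vector field X_t(q,p) = (−(2p₁f + e^{4t}·l·∂V/∂q₂), −(2p₂f − e^{4t}·l·∂V/∂q₁), e^{4t}·f·∂V/∂q₁, e^{4t}·f·∂V/∂q₂), and the reduced Hamiltonian H_t(q,p) = p₁² + p₂² + e^{4t}·V(q₁,q₂). Then for every x ∈ ℝ⁴ and every w ∈ ℝ⁴: X_t(x)ᵀ · Ω_N(x) · w = DH_t(x)(w). That is, the interior product X_t ⌟ ω|_N equals the exact 1-form dH_t, so each X_t is the Hamiltonian vector field of H_t with respect to the reduced symplectic form; in particular the Lie derivative of ω|_N along X_t vanishes. -/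

import Mathlib

open Matrix

/-- The closure-condition function `l(q,p) = (∂f/∂p₁)(p)·q₂ − (∂f/∂p₂)(p)·q₁` on the reduced
phase space `ℝ⁴` with coordinates `(q₁,q₂,p₁,p₂)`. -/
noncomputable def lfunN (f : (Fin 2 → ℝ) → ℝ) (x : Fin 4 → ℝ) : ℝ :=
  fderiv ℝ f ![x 2, x 3] (Pi.single 0 1) * x 1 -
    fderiv ℝ f ![x 2, x 3] (Pi.single 1 1) * x 0

/-- Matrix of the reduced symplectic form
`ω|_N = (1/f)(dp₁∧dq₁ + dp₂∧dq₂ + (l/f)·dp₁∧dp₂)` on the reduced phase space `ℝ⁴`. -/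
noncomputable def OmegaN (f : (Fin 2 → ℝ) → ℝ) (x : Fin 4 → ℝ) : Matrix (Fin 4) (Fin 4) ℝ :=
  (f ![x 2, x 3])⁻¹ •
    !![0, 0, -1, 0;
       0, 0, 0, -1;
       1, 0, 0, lfunN f x / f ![x 2, x 3];
       0, 1, -(lfunN f x / f ![x 2, x 3]), 0]

/-- The time-dependent reduced vector field `X_t` of the GUP Bianchi model. -/
noncomputable def Xt (f : (Fin 2 → ℝ) → ℝ) (V : (Fin 2 → ℝ) → ℝ) (t : ℝ) (x : Fin 4 → ℝ) :
    Fin 4 → ℝ :=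
  let fp := f ![x 2, x 3]
  let l := lfunN f x
  let dV1 := fderiv ℝ V ![x 0, x 1] (Pi.single 0 1)
  let dV2 := fderiv ℝ V ![x 0, x 1] (Pi.single 1 1)
  ![-(2 * x 2 * fp + Real.exp (4 * t) * l * dV2),
    -(2 * x 3 * fp - Real.exp (4 * t) * l * dV1),
    Real.exp (4 * t) * fp * dV1,
    Real.exp (4 * t) * fp * dV2]

/-- The time-dependent reduced Hamiltonian `H_t = p₁² + p₂² + e^{4t}·V(q₁,q₂)`. -/
noncomputable def Ht (V : (Fin 2 → ℝ) → ℝ) (t : ℝ) (x : Fin 4 → ℝ) : ℝ :=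
  (x 2) ^ 2 + (x 3) ^ 2 + Real.exp (4 * t) * V ![x 0, x 1]

/-- The interior product `X_t ⌟ ω|_N` equals the exact 1-form `dH_t`:
`X_t(x)ᵀ·Ω_N(x)·w = DH_t(x)(w)`, so each `X_t` is the Hamiltonian vector field of `H_t`
with respect to the reduced symplectic form; in particular the Lie derivative of `ω|_N`
along `X_t` vanishes. -/
theorem stmt_19 (f : (Fin 2 → ℝ) → ℝ) (hf : Differentiable ℝ f) (hf0 : ∀ p, f p ≠ 0)
    (V : (Fin 2 → ℝ) → ℝ) (hV : Differentiable ℝ V) (t : ℝ) :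
    ∀ x w : Fin 4 → ℝ,
      Xt f V t x ⬝ᵥ (OmegaN f x).mulVec w = fderiv ℝ (Ht V t) x w := by
  intro x w
  set E := Real.exp (4 * t) with hE
  set L : (Fin 4 → ℝ) →L[ℝ] (Fin 2 → ℝ) :=
    ContinuousLinearMap.pi ![ContinuousLinearMap.proj 0, ContinuousLinearMap.proj 1] with hLdef
  have hL : ∀ y : Fin 4 → ℝ, L y = ![y 0, y 1] := by
    intro y; funext i; fin_cases i <;> simp [hLdef]
  have h2 : HasFDerivAt (fun y : Fin 4 → ℝ => (y 2)^2)
      (x 2 • (ContinuousLinearMap.proj 2 : (Fin 4 → ℝ) →L[ℝ] ℝ) +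
       x 2 • (ContinuousLinearMap.proj 2 : (Fin 4 → ℝ) →L[ℝ] ℝ)) x := by
    have := ((ContinuousLinearMap.proj 2 : (Fin 4 → ℝ) →L[ℝ] ℝ).hasFDerivAt (x := x)).mul
      ((ContinuousLinearMap.proj 2 : (Fin 4 → ℝ) →L[ℝ] ℝ).hasFDerivAt (x := x))
    simpa [sq, Pi.mul_def] using this
  have h3 : HasFDerivAt (fun y : Fin 4 → ℝ => (y 3)^2)
      (x 3 • (ContinuousLinearMap.proj 3 : (Fin 4 → ℝ) →L[ℝ] ℝ) +
       x 3 • (ContinuousLinearMap.proj 3 : (Fin 4 → ℝ) →L[ℝ] ℝ)) x := by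
    have := ((ContinuousLinearMap.proj 3 : (Fin 4 → ℝ) →L[ℝ] ℝ).hasFDerivAt (x := x)).mul
      ((ContinuousLinearMap.proj 3 : (Fin 4 → ℝ) →L[ℝ] ℝ).hasFDerivAt (x := x))
    simpa [sq, Pi.mul_def] using this
  have hVc : HasFDerivAt (fun y : Fin 4 → ℝ => V ![y 0, y 1])
      ((fderiv ℝ V ![x 0, x 1]).comp L) x := by
    have h := ((hV (L x)).hasFDerivAt).comp x L.hasFDerivAt
    rw [hL] at h
    have heq : (V ∘ ⇑L) = fun y : Fin 4 → ℝ => V ![y 0, y 1] := by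
      funext y; simp [Function.comp, hL]
    rwa [heq] at h
  have hH : HasFDerivAt (Ht V t)
      (((x 2 • (ContinuousLinearMap.proj 2 : (Fin 4 → ℝ) →L[ℝ] ℝ) +
        x 2 • (ContinuousLinearMap.proj 2 : (Fin 4 → ℝ) →L[ℝ] ℝ)) +
        (x 3 • (ContinuousLinearMap.proj 3 : (Fin 4 → ℝ) →L[ℝ] ℝ) +
        x 3 • (ContinuousLinearMap.proj 3 : (Fin 4 → ℝ) →L[ℝ] ℝ))) +
        E • ((fderiv ℝ V ![x 0, x 1]).comp L)) x := by
    exact (h2.add h3).add (hVc.const_mul E)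
  rw [hH.fderiv]
  have hw : (![w 0, w 1] : Fin 2 → ℝ) = w 0 • (Pi.single 0 1 : Fin 2 → ℝ) + w 1 • (Pi.single 1 1 : Fin 2 → ℝ) := by
    funext i; fin_cases i <;> simp
  have happ : (fderiv ℝ V ![x 0, x 1]) ![w 0, w 1] =
      w 0 * fderiv ℝ V ![x 0, x 1] (Pi.single 0 1) +
      w 1 * fderiv ℝ V ![x 0, x 1] (Pi.single 1 1) := by
    rw [hw, map_add, ContinuousLinearMap.map_smul, ContinuousLinearMap.map_smul]; simp [smul_eq_mul]
  simp only [ContinuousLinearMap.add_apply, ContinuousLinearMap.smul_apply,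
    ContinuousLinearMap.coe_comp', Function.comp_apply, ContinuousLinearMap.proj_apply, hL, happ,
    smul_eq_mul]
  simp only [Xt, OmegaN, mulVec, dotProduct, Fin.sum_univ_four]
  simp [Matrix.smul_apply, Matrix.cons_val', Matrix.cons_val_zero, Matrix.cons_val_one]
  have hfx := hf0 ![x 2, x 3]
  field_simp
  ring
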